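/- Let k be an uncountable algebraically closed field of characteristic 0 and let W = k[t,t⁻¹]∂ be the Witt algebra. If 𝔥 is a Lie subalgebra of W with dim_k(W/𝔥) = 1, then there exists x ∈ k with x ≠ 0 such that 𝔥 = (t−x)·k[t,t⁻¹]·∂. -/

import Mathlib

/-- Formal derivative on Laurent polynomials, sending `tⁿ` to `n·tⁿ⁻¹`. -/
noncomputable def lderiv {k : Type*} [CommRing k] (f : LaurentPolynomial k) : LaurentPolynomial k :=
  Finsupp.sum f.coeff fun n a => AddMonoidAlgebra.single (n - 1) ((n : k) * a)

open LaurentPolynomial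

namespace WittAux

variable {k : Type*} [Field k] [CharZero k]

lemma lderiv_single (n : ℤ) (a : k) :
    lderiv (AddMonoidAlgebra.single n a : LaurentPolynomial k) = AddMonoidAlgebra.single (n - 1) ((n : k) * a) := by
  rw [lderiv, AddMonoidAlgebra.coeff_single]
  exact Finsupp.sum_single_index (by simp)

lemma lderiv_add (f g : LaurentPolynomial k) : lderiv (f + g) = lderiv f + lderiv g := by
  rw [lderiv, lderiv, lderiv, AddMonoidAlgebra.coeff_add]
  exact Finsupp.sum_add_index' (fun n => by simp) (fun n a b => by
    rw [mul_add, AddMonoidAlgebra.single_add])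

lemma lderiv_zero : lderiv (0 : LaurentPolynomial k) = 0 := by
  rw [lderiv, AddMonoidAlgebra.coeff_zero]
  exact Finsupp.sum_zero_index

lemma lderiv_C_T (b : k) (n : ℤ) :
    lderiv (C b * T n) = C ((n : k) * b) * T (n - 1) := by
  rw [← single_eq_C_mul_T, lderiv_single, single_eq_C_mul_T]

lemma lderiv_C_mul (c : k) (f : LaurentPolynomial k) :
    lderiv (C c * f) = C c * lderiv f := by
  induction f using AddMonoidAlgebra.induction_linear with
  | zero => rw [mul_zero, lderiv_zero, mul_zero]
  | add f g hf hg => rw [mul_add, lderiv_add, lderiv_add, mul_add, hf, hg]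
  | single n a =>
      rw [show ((AddMonoidAlgebra.single n a : LaurentPolynomial k)) = C a * T n from
        (single_eq_C_mul_T a n), ← mul_assoc, ← map_mul, lderiv_C_T, lderiv_C_T,
        show ((n:k) * (c * a)) = c * ((n:k) * a) by ring, map_mul, mul_assoc]

lemma smul_eq_C_mul (c : k) (f : LaurentPolynomial k) : c • f = C c * f := by
  rw [Algebra.smul_def, LaurentPolynomial.algebraMap_apply]
  simp

lemma lderiv_T (n : ℤ) :
    lderiv (T n : LaurentPolynomial k) = C (n : k) * T (n - 1) := by
  rw [T, lderiv_single, single_eq_C_mul_T, mul_one]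


lemma scalar (L M : ℤ → k)
    (key : ∀ m n : ℤ, ((n : k) - (m : k)) * L (m + n - 1) = L m * M n - L n * M m)
    (hex : ∃ n, L n ≠ 0) :
    ∃ x : k, x ≠ 0 ∧ L 0 ≠ 0 ∧ ∀ n : ℤ, L n = L 0 * x ^ n := by
  -- step 1 : L 0 ≠ 0
  have hL0 : L 0 ≠ 0 := by
    by_contra h0
    -- the basic `m = 0` relation, using `L 0 = 0`
    have r : ∀ n : ℤ, (n : k) * L (n - 1) = -(L n * M 0) := by
      intro n
      have h := key 0 n
      rw [zero_add, h0] at h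
      push_cast at h ⊢
      linear_combination h
    have h1 : L 1 = 0 := by
      by_cases hM : M 0 = 0
      · have hb := r 2
        rw [hM] at hb
        have : (2 : k) * L 1 = 0 := by push_cast at hb ⊢; linear_combination hb
        exact (mul_eq_zero.mp this).resolve_left two_ne_zero
      · have ha := r 1
        rw [show (1:ℤ) - 1 = 0 by ring, h0] at ha
        have : L 1 * M 0 = 0 := by push_cast at ha; linear_combination ha
        exact (mul_eq_zero.mp this).resolve_right hM
    have uniq : ∀ n : ℤ, L n ≠ 0 → (n : k) - 1 + M 1 = 0 := by
      intro n hn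
      have h := key 1 n
      rw [show (1 : ℤ) + n - 1 = n by ring, h1] at h
      have : L n * ((n : k) - 1 + M 1) = 0 := by push_cast at h ⊢; linear_combination h
      exact (mul_eq_zero.mp this).resolve_left hn
    obtain ⟨n₀, hn₀⟩ := hex
    have honly : ∀ m : ℤ, m ≠ n₀ → L m = 0 := by
      intro m hm
      by_contra hLm
      have e1 := uniq n₀ hn₀
      have e2 := uniq m hLm
      have : ((n₀ : k)) = (m : k) := by linear_combination e1 - e2
      exact hm (by exact_mod_cast this.symm)
    have hmono : n₀ = -1 := by
      have h := r (n₀ + 1)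
      rw [show n₀ + 1 - 1 = n₀ by ring, honly (n₀ + 1) (by omega)] at h
      have : ((n₀ + 1 : ℤ) : k) * L n₀ = 0 := by push_cast at h ⊢; linear_combination h
      rcases mul_eq_zero.mp this with h' | h'
      · have : (n₀ + 1 : ℤ) = 0 := by exact_mod_cast h'
        omega
      · exact absurd h' hn₀
    have h := key 2 (-2)
    rw [show (2 : ℤ) + -2 - 1 = -1 by ring,
      honly 2 (by omega), honly (-2) (by omega)] at h
    have h' : (-4 : k) * L (-1) = 0 := by push_cast at h ⊢; linear_combination h
    have : L (-1) = 0 := (mul_eq_zero.mp h').resolve_left (by norm_num)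
    rw [hmono] at hn₀
    exact hn₀ this
  -- step 2 : the recursion  L 0 * L n = L 1 * L (n-1)  for n ≠ 0
  have hS : ∀ n : ℤ, n ≠ 0 → L 0 * L n = L 1 * L (n - 1) := by
    intro n hn
    have h1 := key 1 n
    rw [show (1 : ℤ) + n - 1 = n by ring] at h1
    have h0n := key 0 n
    rw [zero_add] at h0n
    have h01 := key 0 1
    rw [show (0 : ℤ) + 1 - 1 = 0 by ring] at h01
    have main : (n : k) * (L 0 * L n) = (n : k) * (L 1 * L (n - 1)) := by
      push_cast at h1 h0n h01 ⊢
      linear_combination L 0 * h1 - L 1 * h0n + L n * h01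
    exact mul_left_cancel₀ (Int.cast_ne_zero.mpr hn) main
  -- step 3 : L 1 ≠ 0
  have hL1 : L 1 ≠ 0 := by
    by_contra h1
    have honly : ∀ n : ℤ, n ≠ 0 → L n = 0 := by
      intro n hn
      have := hS n hn
      rw [h1, zero_mul] at this
      exact (mul_eq_zero.mp this).resolve_left hL0
    have h := key 2 (-1)
    rw [show (2 : ℤ) + -1 - 1 = 0 by ring,
      honly 2 (by omega), honly (-1) (by omega)] at h
    have h' : (-3 : k) * L 0 = 0 := by push_cast at h ⊢; linear_combination h
    exact hL0 ((mul_eq_zero.mp h').resolve_left (by norm_num))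
  -- step 4 : the master recursion including n = -1
  have hG : ∀ n : ℤ, L 0 * L (n + 1) = L 1 * L n := by
    intro n
    by_cases hn : n = -1
    · subst hn
      rw [show (-1 : ℤ) + 1 = 0 by ring]
      have e1 := key 2 (-1)
      rw [show (2 : ℤ) + -1 - 1 = 0 by ring] at e1
      have e2 := key 0 (-1)
      rw [show (0 : ℤ) + -1 - 1 = -2 by ring] at e2
      have e3 := key 0 2
      rw [show (0 : ℤ) + 2 - 1 = 1 by ring] at e3
      have e4 : L 0 * L 2 = L 1 * L 1 := by
        have := hS 2 (by norm_num); rwa [show (2 : ℤ) - 1 = 1 by ring] at this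
      have e5 : L 0 * L (-1) = L 1 * L (-2) := by
        have := hS (-1) (by norm_num); rwa [show (-1 : ℤ) - 1 = -2 by ring] at this
      have big : (3 : k) * L 0 * (L 0 * L 0) = 3 * L 0 * (L 1 * L (-1)) := by
        push_cast at e1 e2 e3
        linear_combination (-(L 0 * L 0)) * e1 + (L 0 * L 2) * e2 + (-(L 0 * L (-1))) * e3 +
          (L (-2)) * e4 + (-(L 1)) * e5
      have h3 : (3 : k) * L 0 ≠ 0 := by simp [hL0]
      exact mul_left_cancel₀ h3 big
    · have := hS (n + 1) (by omega)
      rwa [show n + 1 - 1 = n by ring] at this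
  have hx : L 1 / L 0 ≠ 0 := div_ne_zero hL1 hL0
  refine ⟨L 1 / L 0, hx, hL0, ?_⟩
  intro n
  induction n using Int.induction_on with
  | zero => simp
  | succ m ih =>
      refine mul_left_cancel₀ hL0 ?_
      rw [hG (m : ℤ), ih, zpow_add₀ hx, zpow_one]
      field_simp
  | pred m ih =>
      refine mul_left_cancel₀ hL1 ?_
      have h := hG (-(m : ℤ) - 1)
      rw [show -(m : ℤ) - 1 + 1 = -(m : ℤ) by ring] at h
      rw [← h, ih, show (-(m : ℤ) - 1) = (-(m : ℤ)) + (-1) by ring, zpow_add₀ hx]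
      rw [zpow_neg_one]
      field_simp


end WittAux

open WittAux

/-- Over an uncountable algebraically closed field of characteristic zero, every Lie
subalgebra `𝔥` of the Witt algebra `W = k[t,t⁻¹]∂` of codimension one is of the form
`(t−x)·k[t,t⁻¹]·∂` for some `x ∈ k`, `x ≠ 0`. -/
theorem witt_codim_one_subalgebra {k : Type*} [Field k] [CharZero k] [IsAlgClosed k]
    [Uncountable k]
    (𝔥 : Submodule k (LaurentPolynomial k))
    (hLie : ∀ a ∈ 𝔥, ∀ b ∈ 𝔥, a * lderiv b - lderiv a * b ∈ 𝔥)
    (hcodim : Module.rank k (LaurentPolynomial k ⧸ 𝔥) = 1) :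
    ∃ x : k, x ≠ 0 ∧ ∀ f : LaurentPolynomial k,
      f ∈ 𝔥 ↔ ∃ r : LaurentPolynomial k,
        f = (LaurentPolynomial.T 1 - LaurentPolynomial.C x) * r := by
  classical
  obtain ⟨v₀, hv₀, hgen⟩ := rank_eq_one_iff.mp hcodim
  set ψ : k →ₗ[k] (LaurentPolynomial k ⧸ 𝔥) := LinearMap.toSpanSingleton k _ v₀ with hψ
  have hinj : Function.Injective ψ := by
    intro c₁ c₂ h
    exact smul_left_injective k hv₀ (by simpa [hψ, LinearMap.toSpanSingleton_apply] using h)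
  have hsurj : Function.Surjective ψ := fun w => (hgen w).imp (fun c hc => by simpa [hψ] using hc)
  set eqv := LinearEquiv.ofBijective ψ ⟨hinj, hsurj⟩ with heqv
  set lam : LaurentPolynomial k →ₗ[k] k := (eqv.symm.toLinearMap).comp 𝔥.mkQ with hlam
  have hmem : ∀ f, f ∈ 𝔥 ↔ lam f = 0 := by
    intro f
    rw [show lam f = eqv.symm (𝔥.mkQ f) from rfl, LinearEquiv.map_eq_zero_iff,
      Submodule.mkQ_apply, Submodule.Quotient.mk_eq_zero]
  obtain ⟨e, he'⟩ := 𝔥.mkQ_surjective (eqv 1)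
  have he : lam e = 1 := by
    rw [show lam e = eqv.symm (𝔥.mkQ e) from rfl, he', LinearEquiv.symm_apply_apply]
  set mu : LaurentPolynomial k → k := fun f => lam (e * lderiv f - lderiv e * f) with hmu
  have mu_add_C : ∀ f g : LaurentPolynomial k, ∀ c : k,
      mu (f + C c * g) = mu f + c * mu g := by
    intro f g c
    have hexp : e * lderiv (f + C c * g) - lderiv e * (f + C c * g)
        = (e * lderiv f - lderiv e * f) + C c * (e * lderiv g - lderiv e * g) := by
      rw [lderiv_add, lderiv_C_mul]; ring
    show lam _ = lam _ + c * lam _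
    rw [hexp, map_add, ← WittAux.smul_eq_C_mul, map_smul, smul_eq_mul]
  have mainrel : ∀ a b : LaurentPolynomial k,
      lam (a * lderiv b - lderiv a * b) = lam a * mu b - lam b * mu a := by
    intro a b
    set α := lam a with hα
    set β := lam b with hβ
    set a₀ := a + C (-α) * e with ha₀
    set b₀ := b + C (-β) * e with hb₀
    have hla : lam a₀ = 0 := by
      rw [ha₀, map_add, ← WittAux.smul_eq_C_mul, map_smul, smul_eq_mul, he, ← hα]; ring
    have hlb : lam b₀ = 0 := by
      rw [hb₀, map_add, ← WittAux.smul_eq_C_mul, map_smul, smul_eq_mul, he, ← hβ]; ring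
    have ha : a = a₀ + C α * e := by rw [ha₀, map_neg]; ring
    have hb : b = b₀ + C β * e := by rw [hb₀, map_neg]; ring
    have hda : lderiv a = lderiv a₀ + C α * lderiv e := by
      conv_lhs => rw [ha]
      rw [lderiv_add, lderiv_C_mul]
    have hdb : lderiv b = lderiv b₀ + C β * lderiv e := by
      conv_lhs => rw [hb]
      rw [lderiv_add, lderiv_C_mul]
    have hexp : a * lderiv b - lderiv a * b
        = (a₀ * lderiv b₀ - lderiv a₀ * b₀) + C α * (e * lderiv b₀ - lderiv e * b₀)
          - C β * (e * lderiv a₀ - lderiv e * a₀) := by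
      conv_lhs => rw [hda, hdb, ha, hb]
      ring
    rw [hexp, map_sub, map_add, ← WittAux.smul_eq_C_mul α, ← WittAux.smul_eq_C_mul β, map_smul, map_smul,
      smul_eq_mul, smul_eq_mul]
    have h0 : lam (a₀ * lderiv b₀ - lderiv a₀ * b₀) = 0 :=
      (hmem _).mp (hLie a₀ ((hmem a₀).mpr hla) b₀ ((hmem b₀).mpr hlb))
    rw [h0]
    have hb' : mu b₀ = mu b - β * mu e := by
      rw [hb₀, show (C (-β) : LaurentPolynomial k) = C (-β) from rfl]
      have := mu_add_C b e (-β)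
      rw [this]; ring
    have ha' : mu a₀ = mu a - α * mu e := by
      rw [ha₀]
      have := mu_add_C a e (-α)
      rw [this]; ring
    rw [show lam (e * lderiv b₀ - lderiv e * b₀) = mu b₀ from rfl,
      show lam (e * lderiv a₀ - lderiv e * a₀) = mu a₀ from rfl, hb', ha']
    ring
  have key : ∀ m n : ℤ, ((n : k) - (m : k)) * lam (T (m + n - 1))
      = lam (T m) * mu (T n) - lam (T n) * mu (T m) := by
    intro m n
    have h := mainrel (T m) (T n)
    rw [lderiv_T, lderiv_T] at h
    have harg : (T m : LaurentPolynomial k) * (C (n : k) * T (n - 1))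
        - C (m : k) * T (m - 1) * T n = C ((n : k) - (m : k)) * T (m + n - 1) := by
      rw [map_sub, mul_left_comm, ← T_add, show m + (n - 1) = m + n - 1 by ring,
        mul_assoc, ← T_add, show m - 1 + n = m + n - 1 by ring, sub_mul]
    rw [harg, ← WittAux.smul_eq_C_mul, map_smul, smul_eq_mul] at h
    exact h
  have hexL : ∃ n : ℤ, lam (T n) ≠ 0 := by
    by_contra hcon
    push_neg at hcon
    have hzero : ∀ f : LaurentPolynomial k, lam f = 0 := by
      intro f
      induction f using AddMonoidAlgebra.induction_linear with
      | zero => exact map_zero lam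
      | add f g hf hg => rw [map_add, hf, hg, add_zero]
      | single n a =>
          have h3 : (AddMonoidAlgebra.single n a : LaurentPolynomial k) = a • T n := by
            rw [WittAux.smul_eq_C_mul]; exact single_eq_C_mul_T a n
          have h2 : lam ((a • T n : LaurentPolynomial k)) = 0 := by
            rw [map_smul, smul_eq_mul]
            exact mul_eq_zero_of_right a (hcon n)
          exact (congrArg lam h3).trans h2
    rw [hzero e] at he
    norm_num at he
  obtain ⟨x, hx, hL0, hform⟩ := scalar (fun n => lam (T n)) (fun n => mu (T n)) key hexL
  -- the evaluation homomorphism at `x`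
  set u : kˣ := Units.mk0 x hx with hu
  set E : LaurentPolynomial k →ₐ[k] k :=
    (AddMonoidAlgebra.lift k k ℤ) ((Units.coeHom k).comp (zpowersHom kˣ u)) with hE
  have hEsingle : ∀ (n : ℤ) (a : k), E (AddMonoidAlgebra.single n a : LaurentPolynomial k) = a * x ^ n := by
    intro n a
    rw [hE, AddMonoidAlgebra.lift_single]
    simp [hu, Units.val_zpow_eq_zpow_val]
  have hET : ∀ n : ℤ, E (T n) = x ^ n := by
    intro n
    rw [T, hEsingle, one_mul]
  have hEC : ∀ c : k, E (C c) = c := by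
    intro c
    rw [show (C c : LaurentPolynomial k) = AddMonoidAlgebra.single 0 c from rfl, hEsingle]
    simp
  have hlamE : ∀ f : LaurentPolynomial k, lam f = lam (T 0) * E f := by
    suffices h : lam = lam (T 0) • (E.toLinearMap) by
      intro f; rw [h]; simp
    refine AddMonoidAlgebra.lhom_ext' fun n => LinearMap.ext fun a => ?_
    have h3 : (AddMonoidAlgebra.single n a : LaurentPolynomial k) = a • T n := by
      rw [WittAux.smul_eq_C_mul]; exact single_eq_C_mul_T a n
    have hl : lam ((a • T n : LaurentPolynomial k)) = lam (T 0) * (a * x ^ n) := by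
      rw [map_smul, smul_eq_mul, hform n]; ring
    have hr : (lam (T 0) • E.toLinearMap) ((a • T n : LaurentPolynomial k))
        = lam (T 0) * (a * x ^ n) := by
      rw [LinearMap.smul_apply, smul_eq_mul]
      have hinner : E.toLinearMap ((a • T n : LaurentPolynomial k)) = a * x ^ n := by
        rw [show E.toLinearMap (a • T n) = E (a • T n) from rfl, map_smul, smul_eq_mul, hET]
      rw [hinner]
    exact (congrArg lam h3).trans ((hl.trans hr.symm).trans
      (congrArg (lam (T 0) • E.toLinearMap) h3.symm))
  have hEzero : ∀ f : LaurentPolynomial k, f ∈ 𝔥 ↔ E f = 0 := by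
    intro f
    rw [hmem f, hlamE f, mul_eq_zero]
    simp only [hL0, false_or]
  have hEpoly : ∀ p : Polynomial k, E (p.toLaurent) = p.eval x := by
    intro p
    induction p using Polynomial.induction_on' with
    | add p q hp hq => rw [map_add, map_add, hp, hq, Polynomial.eval_add]
    | monomial n a =>
        rw [← Polynomial.C_mul_X_pow_eq_monomial, map_mul, map_pow, Polynomial.toLaurent_C,
          Polynomial.toLaurent_X, map_mul, map_pow, hEC, hET, Polynomial.eval_mul,
          Polynomial.eval_pow, Polynomial.eval_C, Polynomial.eval_X, zpow_one]
  refine ⟨x, hx, fun f => ?_⟩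
  rw [hEzero f]
  constructor
  · intro hEf
    obtain ⟨nn, p, hp⟩ := f.exists_T_pow
    have hroot : p.IsRoot x := by
      show p.eval x = 0
      rw [← hEpoly p, hp, map_mul, hEf, zero_mul]
    obtain ⟨q, hq⟩ := Polynomial.dvd_iff_isRoot.mpr hroot
    refine ⟨q.toLaurent * T (-(nn : ℤ)), ?_⟩
    have hf' : f = p.toLaurent * T (-(nn : ℤ)) := by
      rw [hp, mul_assoc, ← T_add, add_neg_cancel, T_zero, mul_one]
    rw [hf', hq, map_mul, map_sub, Polynomial.toLaurent_X, Polynomial.toLaurent_C, mul_assoc]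
  · rintro ⟨r, rfl⟩
    rw [map_mul, map_sub, hET, hEC, zpow_one, sub_self, zero_mul]
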